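/- For real x with 0 < x < 1, ∑_{n=1}^∞ (H_n^{(2)}/n)(-x)^n = -Li_2(-x) log(1+x) - log(x) log^2(1+x) + (2/3) log^3(1+x) + 2 log(1+x) Li_2(1/(1+x)) + 2 Li_3(1/(1+x)) - 2 ζ(3) + Li_3(-x). -/

import Mathlib

open Real Filter Finset

noncomputable def Li (m : ℕ) (x : ℝ) : ℝ := ∑' n : ℕ, x ^ (n + 1) / (n + 1 : ℝ) ^ m

noncomputable def H (p n : ℕ) : ℝ := ∑ j ∈ Finset.Icc 1 n, 1 / (j : ℝ) ^ p

noncomputable def Hbar (p n : ℕ) : ℝ := ∑ j ∈ Finset.Icc 1 n, (-1 : ℝ) ^ (j - 1) / (j : ℝ) ^ p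


lemma npow_ge_one (m n : ℕ) : (1:ℝ) ≤ (n + 1 : ℝ) ^ m := by
  apply one_le_pow₀
  have := Nat.cast_nonneg (α := ℝ) n
  linarith

lemma term_bound (m : ℕ) (y : ℝ) (n : ℕ) : ‖y ^ (n+1) / (n+1:ℝ) ^ m‖ ≤ |y| ^ (n+1) := by
  rw [norm_div, norm_pow, Real.norm_eq_abs, Real.norm_eq_abs]
  rw [abs_of_pos (by positivity : (0:ℝ) < (n+1:ℝ) ^ m)]
  apply div_le_self (by positivity) (npow_ge_one m n)

lemma summable_li (m : ℕ) {y : ℝ} (hy : |y| < 1) :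
    Summable (fun n : ℕ => y ^ (n+1) / (n+1:ℝ) ^ m) := by
  apply Summable.of_norm
  apply Summable.of_nonneg_of_le (fun n => norm_nonneg _) (term_bound m y)
  simpa [pow_succ, mul_comm] using (summable_geometric_of_lt_one (abs_nonneg y) hy).mul_right |y|

lemma H2_nonneg (n : ℕ) : 0 ≤ H 2 n := by
  unfold H; positivity

lemma H_succ (k : ℕ) : H 2 (k+1) = H 2 k + 1 / ((k+1:ℝ))^2 := by
  unfold H
  rw [Finset.sum_Icc_succ_top (by omega)]
  push_cast; ring_nf

lemma H2_le_two (n : ℕ) : H 2 n ≤ 2 := by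
  have key : ∀ n : ℕ, H 2 (n+1) ≤ 2 - 1 / (n+1 : ℝ) := by
    intro n
    induction n with
    | zero => norm_num [H]
    | succ k ih =>
      rw [H_succ (k+1)]
      have hk : (0:ℝ) < k + 1 := by positivity
      have hk2 : (0:ℝ) < k + 2 := by positivity
      have hstep : 1 / ((k+2:ℝ))^2 ≤ 1 / (k+1:ℝ) - 1 / (k+2:ℝ) := by
        rw [div_sub_div _ _ (ne_of_gt hk) (ne_of_gt hk2), div_le_div_iff₀ (by positivity) (by positivity)]
        nlinarith
      push_cast
      have h12 : (↑k + 1 + 1 : ℝ) = ↑k + 2 := by ring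
      rw [h12]
      linarith
  cases n with
  | zero => norm_num [H]
  | succ k =>
    have h0 : (0:ℝ) < k+1 := by positivity
    have := le_of_lt (div_pos one_pos h0)
    linarith [key k]



lemma hasDerivAt_li (m : ℕ) {y : ℝ} (hy : |y| < 1) :
    HasDerivAt (Li (m+1)) (∑' n : ℕ, y ^ n / (n+1:ℝ) ^ m) y := by
  set r : ℝ := (|y| + 1) / 2 with hr
  have hyr : |y| < r := by rw [hr]; linarith
  have hr1 : r < 1 := by rw [hr]; linarith
  have hr0 : 0 < r := lt_of_le_of_lt (abs_nonneg y) hyr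
  have key := hasDerivAt_tsum_of_isPreconnected
    (u := fun n : ℕ => r ^ n)
    (t := Set.Ioo (-r) r)
    (g := fun (n : ℕ) (t : ℝ) => t ^ (n+1) / (n+1:ℝ) ^ (m+1))
    (g' := fun (n : ℕ) (t : ℝ) => t ^ n / (n+1:ℝ) ^ m)
    (summable_geometric_of_lt_one hr0.le hr1)
    isOpen_Ioo isPreconnected_Ioo
    (fun n t _ => ?_) (fun n t ht => ?_)
    (y₀ := 0) (by constructor <;> simp [hr0, neg_lt_zero] <;> linarith) ?_
    (y := y) (abs_lt.mp hyr)
  · exact key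
  · have h := (hasDerivAt_pow (n+1) t).div_const ((n+1:ℝ) ^ (m+1))
    refine HasDerivAt.congr_deriv h ?_
    have hne : ((n:ℝ)+1) ≠ 0 := by positivity
    field_simp [pow_succ]
    rw [Nat.add_sub_cancel]; push_cast
    ring
  · have ht' : |t| ≤ r := by
      rw [abs_le]; exact ⟨ht.1.le, ht.2.le⟩
    calc ‖t ^ n / (n+1:ℝ) ^ m‖ ≤ |t| ^ n := by
          rw [norm_div, norm_pow, Real.norm_eq_abs, Real.norm_eq_abs,
            abs_of_pos (by positivity : (0:ℝ) < (n+1:ℝ) ^ m)]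
          exact div_le_self (by positivity) (npow_ge_one m n)
      _ ≤ r ^ n := pow_le_pow_left₀ (abs_nonneg t) ht' n
  · apply Summable.congr summable_zero
    intro n; simp

lemma li_one_eq {y : ℝ} (hy : |y| < 1) : Li 1 y = -Real.log (1 - y) := by
  have := Real.hasSum_pow_div_log_of_abs_lt_one hy
  rw [Li]
  simpa [pow_one] using this.tsum_eq

lemma H_eq_range (n : ℕ) : H 2 n = ∑ k ∈ Finset.range n, 1 / ((k:ℝ)+1) ^ 2 := by
  unfold H
  rw [show Finset.Icc 1 n = Finset.Ico 1 (n+1) by rfl, Finset.sum_Ico_eq_sum_range]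
  simp only [Nat.add_sub_cancel]
  apply Finset.sum_congr rfl
  intro k _
  push_cast
  ring_nf

lemma tsum_H_geom {y : ℝ} (hy : |y| < 1) :
    ∑' n : ℕ, H 2 (n+1) * y ^ (n+1) = Li 2 y / (1 - y) := by
  have hgs : Summable (fun n : ℕ => ‖y ^ n‖) := by
    simpa using summable_geometric_of_lt_one (abs_nonneg y) hy
  have hfs : Summable (fun n : ℕ => ‖y ^ (n+1) / (n+1:ℝ) ^ 2‖) := by
    apply Summable.of_nonneg_of_le (fun n => norm_nonneg _) (term_bound 2 y)
    simpa [pow_succ, mul_comm] using (summable_geometric_of_lt_one (abs_nonneg y) hy).mul_right |y|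
  have key := tsum_mul_tsum_eq_tsum_sum_antidiagonal_of_summable_norm hfs hgs
  have hy1 : (1:ℝ) - y ≠ 0 := by
    rcases abs_lt.mp hy with ⟨h1, h2⟩; intro h; linarith [sub_eq_zero.mp h]
  rw [tsum_geometric_of_abs_lt_one hy] at key
  rw [div_eq_mul_inv]
  rw [show Li 2 y * (1-y)⁻¹ = (∑' n : ℕ, y ^ (n+1) / (n+1:ℝ) ^ 2) * (1-y)⁻¹ from rfl, key]
  apply tsum_congr
  intro n
  rw [Finset.Nat.sum_antidiagonal_eq_sum_range_succ_mk, H_eq_range]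
  rw [Finset.sum_mul]
  apply Finset.sum_congr rfl
  intro k hk
  have hk' : k ≤ n := Nat.lt_succ_iff.mp (Finset.mem_range.mp hk)
  have : y ^ (k+1) * y ^ (n-k) = y ^ (n+1) := by
    rw [← pow_add]; congr 1; omega
  show 1 / ((k:ℝ)+1)^2 * y ^ (n+1) = y^(k+1)/((k:ℝ)+1)^2 * y^(n-k)
  rw [← this]
  ring

lemma H2_zero : H 2 0 = 0 := by simp [H]

lemma H2_abs_le (n : ℕ) : |H 2 n| ≤ 2 := by
  rw [abs_of_nonneg (H2_nonneg n)]; exact H2_le_two n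

lemma summable_Hgeom {t : ℝ} (ht : |t| < 1) : Summable (fun n : ℕ => H 2 n * t ^ n) := by
  apply Summable.of_norm
  apply Summable.of_nonneg_of_le (fun n => norm_nonneg _) (fun n => ?_)
    ((summable_geometric_of_lt_one (abs_nonneg t) ht).mul_left 2)
  rw [norm_mul, norm_pow, Real.norm_eq_abs, Real.norm_eq_abs]
  exact mul_le_mul_of_nonneg_right (H2_abs_le n) (by positivity)

lemma hasDerivAt_F {t : ℝ} (ht : |t| < 1) :
    HasDerivAt (fun s : ℝ => ∑' n : ℕ, H 2 n / n * (-s) ^ n)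
      (∑' n : ℕ, H 2 n * (-1) ^ n * t ^ (n-1)) t := by
  set r : ℝ := (|t| + 1) / 2 with hr
  have htr : |t| < r := by rw [hr]; linarith
  have hr1 : r < 1 := by rw [hr]; linarith
  have hr0 : 0 < r := lt_of_le_of_lt (abs_nonneg t) htr
  have husum : Summable (fun n : ℕ => 2 * r ^ (n-1)) := by
    apply Summable.mul_left
    rw [← summable_nat_add_iff 1]
    simpa using summable_geometric_of_lt_one hr0.le hr1
  exact hasDerivAt_tsum_of_isPreconnected
    (u := fun n : ℕ => 2 * r ^ (n-1))
    (t := Set.Ioo (-r) r)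
    (g := fun (n : ℕ) (s : ℝ) => H 2 n / n * (-s) ^ n)
    (g' := fun (n : ℕ) (s : ℝ) => H 2 n * (-1) ^ n * s ^ (n-1))
    husum isOpen_Ioo isPreconnected_Ioo
    (fun n s _ => by
      have h1 : HasDerivAt (fun s : ℝ => H 2 n / n * (-1:ℝ) ^ n * s ^ n)
          (H 2 n / n * (-1:ℝ) ^ n * (n * s ^ (n-1))) s :=
        (hasDerivAt_pow n s).const_mul _
      have h2 : (fun s : ℝ => H 2 n / n * (-1:ℝ) ^ n * s ^ n) = fun s : ℝ => H 2 n / n * (-s) ^ n := by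
        funext z; rw [neg_pow]; ring
      rw [h2] at h1
      refine HasDerivAt.congr_deriv h1 ?_
      cases n with
      | zero => simp [H2_zero]
      | succ k =>
        have : ((k:ℝ)+1) ≠ 0 := by positivity
        field_simp)
    (fun n s hs => by
      have hs' : |s| ≤ r := by rw [abs_le]; exact ⟨hs.1.le, hs.2.le⟩
      rw [Real.norm_eq_abs, abs_mul, abs_mul, abs_pow, abs_pow, abs_neg, abs_one, one_pow, mul_one]
      apply mul_le_mul (H2_abs_le n) (pow_le_pow_left₀ (abs_nonneg s) hs' _) (by positivity) (by norm_num))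
    (y₀ := 0) (by constructor <;> simp [hr0] <;> linarith)
    (by
      apply Summable.congr summable_zero
      intro n
      cases n with
      | zero => simp [H2_zero]
      | succ k => simp)
    (abs_lt.mp htr)

lemma deriv_F_eq {t : ℝ} (ht0 : 0 < t) (ht1 : t < 1) :
    ∑' n : ℕ, H 2 n * (-1) ^ n * t ^ (n-1) = Li 2 (-t) / (t * (1+t)) := by
  have habs : |(-t)| < 1 := by rw [abs_neg, abs_of_pos ht0]; exact ht1
  have hsum : Summable (fun n : ℕ => H 2 n * (-t) ^ n) := summable_Hgeom habs
  have htne : t ≠ 0 := ne_of_gt ht0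
  have step1 : ∑' n : ℕ, H 2 n * (-1) ^ n * t ^ (n-1) = t⁻¹ * ∑' n : ℕ, H 2 n * (-t) ^ n := by
    rw [← tsum_mul_left]
    apply tsum_congr; intro n
    cases n with
    | zero => simp [H2_zero]
    | succ k =>
      rw [neg_pow]
      field_simp
      rw [Nat.add_sub_cancel]
      ring
  have step2 : ∑' n : ℕ, H 2 n * (-t) ^ n = Li 2 (-t) / (1 + t) := by
    rw [Summable.tsum_eq_zero_add hsum]
    rw [show H 2 0 * (-t) ^ 0 = 0 by simp [H2_zero]]
    rw [zero_add, tsum_H_geom habs]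
    rw [sub_neg_eq_add]
  rw [step1, step2]
  field_simp

lemma li_zero (m : ℕ) : Li m 0 = 0 := by
  rw [Li]
  convert tsum_zero with n
  simp

lemma summable_invpow (m : ℕ) (hm : 2 ≤ m) : Summable (fun n : ℕ => 1 / ((n:ℝ)+1) ^ m) := by
  have := Real.summable_one_div_nat_pow.mpr hm
  rw [← summable_nat_add_iff 1] at this
  apply this.congr
  intro n
  push_cast
  ring_nf

lemma li_abs_le (m : ℕ) (hm : 2 ≤ m) {y : ℝ} (hy : |y| ≤ 1) :
    |Li m y| ≤ ∑' n : ℕ, 1 / ((n:ℝ)+1) ^ m := by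
  rw [Li]
  have hsum : Summable (fun n : ℕ => 1 / ((n:ℝ)+1) ^ m) := summable_invpow m hm
  have hab : ∀ n : ℕ, |y ^ (n+1) / (n+1:ℝ) ^ m| ≤ 1 / ((n:ℝ)+1) ^ m := by
    intro n
    rw [abs_div, abs_pow, abs_of_pos (by positivity : (0:ℝ) < ((n:ℝ)+1:ℝ)^m)]
    gcongr
    exact pow_le_one₀ (abs_nonneg y) hy
  have hs2 : Summable (fun n : ℕ => |y ^ (n+1) / (n+1:ℝ) ^ m|) :=
    Summable.of_nonneg_of_le (fun n => abs_nonneg _) hab hsum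
  calc |∑' n : ℕ, y ^ (n+1) / (n+1:ℝ) ^ m| ≤ ∑' n : ℕ, |y ^ (n+1) / (n+1:ℝ) ^ m| := by
        have h2 : Summable (fun n : ℕ => ‖y ^ (n+1) / (n+1:ℝ) ^ m‖) := by
          simpa only [Real.norm_eq_abs] using hs2
        have := norm_tsum_le_tsum_norm h2
        simpa only [Real.norm_eq_abs] using this
    _ ≤ ∑' n : ℕ, 1 / ((n:ℝ)+1) ^ m := Summable.tsum_le_tsum hab hs2 hsum

lemma hasDerivAt_li' (m : ℕ) {y : ℝ} (hy : |y| < 1) (hy0 : y ≠ 0) :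
    HasDerivAt (Li (m+1)) (Li m y / y) y := by
  have h := hasDerivAt_li m hy
  convert h using 1
  rw [Li, div_eq_inv_mul, ← tsum_mul_left]
  apply tsum_congr; intro n
  rw [pow_succ']
  field_simp

lemma hasDerivAt_g {t : ℝ} (ht0 : 0 < t) (ht1 : t < 1) :
    HasDerivAt (fun s : ℝ => -Li 2 (-s) * Real.log (1 + s) - Real.log s * (Real.log (1 + s)) ^ 2
        + (2 / 3) * (Real.log (1 + s)) ^ 3
        + 2 * Real.log (1 + s) * Li 2 (1 / (1 + s))
        + 2 * Li 3 (1 / (1 + s)) - 2 * Li 3 1 + Li 3 (-s))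
      (Li 2 (-t) / (t * (1 + t))) t := by
  have h1t : (0:ℝ) < 1 + t := by linarith
  have h1t' : (1:ℝ) + t ≠ 0 := ne_of_gt h1t
  have htne : t ≠ 0 := ne_of_gt ht0
  have habs : |(-t)| < 1 := by rw [abs_neg, abs_of_pos ht0]; exact ht1
  have hnegne : -t ≠ 0 := by simpa using htne
  have hu0 : 0 < 1/(1+t) := by positivity
  have hu1 : 1/(1+t) < 1 := by rw [div_lt_one h1t]; linarith
  have huabs : |1/(1+t)| < 1 := by rw [abs_of_pos hu0]; exact hu1
  have hune : 1/(1+t) ≠ 0 := ne_of_gt hu0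
  have hL : HasDerivAt (fun s : ℝ => Real.log (1 + s)) (1/(1+t)) t := by
    have := ((hasDerivAt_id t).const_add 1).log h1t'
    simpa using this
  have hlog : HasDerivAt Real.log t⁻¹ t := Real.hasDerivAt_log htne
  have hu : HasDerivAt (fun s : ℝ => 1/(1+s)) (-(1/(1+t)^2)) t := by
    have := ((hasDerivAt_id t).const_add 1).inv h1t'
    simp only [one_div]
    refine HasDerivAt.congr_deriv this ?_
    simp only [id_eq]
    field_simp
  have hA : HasDerivAt (fun s : ℝ => Li 2 (-s)) (Li 1 (-t) / (-t) * (-1)) t := by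
    exact (hasDerivAt_li' 1 habs hnegne).comp t (hasDerivAt_neg t)
  have hB : HasDerivAt (fun s : ℝ => Li 2 (1/(1+s)))
      (Li 1 (1/(1+t)) / (1/(1+t)) * (-(1/(1+t)^2))) t :=
    by exact (hasDerivAt_li' 1 huabs hune).comp t hu
  have hC : HasDerivAt (fun s : ℝ => Li 3 (1/(1+s)))
      (Li 2 (1/(1+t)) / (1/(1+t)) * (-(1/(1+t)^2))) t :=
    by exact (hasDerivAt_li' 2 huabs hune).comp t hu
  have hD : HasDerivAt (fun s : ℝ => Li 3 (-s)) (Li 2 (-t) / (-t) * (-1)) t :=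
    (hasDerivAt_li' 2 habs hnegne).comp t (hasDerivAt_neg t)
  have hLi1neg : Li 1 (-t) = -Real.log (1 + t) := by
    rw [li_one_eq habs, sub_neg_eq_add]
  have hLi1u : Li 1 (1/(1+t)) = -(Real.log t - Real.log (1 + t)) := by
    rw [li_one_eq huabs]
    congr 1
    rw [show (1:ℝ) - 1/(1+t) = t/(1+t) by field_simp; ring, Real.log_div htne h1t']
  have big := (((((((hA.mul hL).neg.sub (hlog.mul (hL.pow 2))).add
      ((hL.pow 3).const_mul (2/3))).add
      ((hL.const_mul 2).mul hB)).add
      (hC.const_mul 2)).sub_const (2 * Li 3 1)).add hD)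
  refine HasDerivAt.congr_deriv (big.congr_of_eventuallyEq (Filter.Eventually.of_forall fun s => ?_)) ?_
  · simp only [Pi.add_apply, Pi.sub_apply, Pi.mul_apply, Pi.neg_apply, Pi.pow_apply]; ring
  · rw [hLi1neg, hLi1u, Pi.pow_apply]
    field_simp
    ring

-- Tendsto of Li m (-s) to 0 as s → 0+
lemma tendsto_li_neg (m : ℕ) :
    Tendsto (fun s : ℝ => Li (m+1) (-s)) (nhdsWithin 0 (Set.Ioi 0)) (nhds 0) := by
  have hli : HasDerivAt (Li (m+1)) (∑' n : ℕ, (0:ℝ) ^ n / ((n:ℝ)+1) ^ m) (-0 : ℝ) := by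
    rw [neg_zero]; exact hasDerivAt_li m (by norm_num)
  have h := (hli.comp 0 (hasDerivAt_neg 0)).continuousAt
  have h2 : ContinuousAt (fun s : ℝ => Li (m+1) (-s)) 0 := by
    exact h
  have h3 := h2.tendsto.mono_left (nhdsWithin_le_nhds (s := Set.Ioi (0:ℝ)))
  simpa [li_zero] using h3

lemma tendsto_log1p : Tendsto (fun s : ℝ => Real.log (1+s)) (nhdsWithin 0 (Set.Ioi 0)) (nhds 0) := by
  have h : ContinuousAt (fun s : ℝ => Real.log (1+s)) 0 := by
    apply (Real.continuousAt_log (by norm_num : (1:ℝ)+0 ≠ 0)).comp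
    fun_prop
  have h3 := h.tendsto.mono_left (nhdsWithin_le_nhds (s := Set.Ioi (0:ℝ)))
  simpa using h3

lemma log1p_le {s : ℝ} (hs : 0 < s) : Real.log (1+s) ≤ s := by
  have := Real.log_le_sub_one_of_pos (by linarith : (0:ℝ) < 1+s)
  linarith

lemma log1p_nonneg {s : ℝ} (hs : 0 < s) : 0 ≤ Real.log (1+s) :=
  Real.log_nonneg (by linarith)

lemma tendsto_logterm :
    Tendsto (fun s : ℝ => Real.log s * (Real.log (1+s))^2) (nhdsWithin 0 (Set.Ioi 0)) (nhds 0) := by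
  apply squeeze_zero_norm' (a := fun s : ℝ => |Real.log s * s ^ (2:ℝ)|)
  · filter_upwards [eventually_mem_nhdsWithin] with s hs
    have hs' : (0:ℝ) < s := hs
    rw [Real.norm_eq_abs, abs_mul, abs_mul, abs_pow]
    have h1 : |Real.log (1+s)| ≤ s := by
      rw [abs_of_nonneg (log1p_nonneg hs')]; exact log1p_le hs'
    have h2 : |Real.log (1+s)|^2 ≤ s^2 := by
      apply pow_le_pow_left₀ (abs_nonneg _) h1
    have h3 : |s ^ (2:ℝ)| = s^2 := by
      rw [show s ^ (2:ℝ) = s ^ (2:ℕ) by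
        rw [show (2:ℝ) = ((2:ℕ):ℝ) by norm_num, Real.rpow_natCast]]
      rw [abs_of_nonneg (by positivity)]
    rw [h3]
    exact mul_le_mul_of_nonneg_left h2 (abs_nonneg _)
  · have := (tendsto_log_mul_rpow_nhdsGT_zero (by norm_num : (0:ℝ) < 2)).abs
    simpa using this

lemma tendsto_term4 :
    Tendsto (fun s : ℝ => 2 * Real.log (1+s) * Li 2 (1/(1+s))) (nhdsWithin 0 (Set.Ioi 0)) (nhds 0) := by
  set K : ℝ := ∑' n : ℕ, 1 / ((n:ℝ)+1) ^ 2 with hK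
  apply squeeze_zero_norm' (a := fun s : ℝ => 2 * |Real.log (1+s)| * K)
  · filter_upwards [eventually_mem_nhdsWithin] with s hs
    have hs' : (0:ℝ) < s := hs
    have h1s : (0:ℝ) < 1 + s := by linarith
    have hu : |1/(1+s)| ≤ 1 := by
      rw [abs_of_pos (by positivity)]
      rw [div_le_one h1s]; linarith
    have := li_abs_le 2 (le_refl 2) hu
    rw [Real.norm_eq_abs, abs_mul, abs_mul, abs_two]
    apply mul_le_mul_of_nonneg_left this (by positivity)
  · have := (tendsto_log1p.abs.const_mul 2).mul_const K
    simpa using this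

lemma tendsto_li_u (m : ℕ) :
    Tendsto (fun s : ℝ => Li (m+3) (1/(1+s))) (nhdsWithin 0 (Set.Ioi 0)) (nhds (Li (m+3) 1)) := by
  have key : Tendsto (fun s : ℝ => ∑' n : ℕ, (1/(1+s)) ^ (n+1) / ((n:ℝ)+1) ^ (m+3))
      (nhdsWithin 0 (Set.Ioi 0)) (nhds (∑' n : ℕ, (1:ℝ) ^ (n+1) / ((n:ℝ)+1) ^ (m+3))) := by
    apply tendsto_tsum_of_dominated_convergence (bound := fun n : ℕ => 1 / ((n:ℝ)+1) ^ (m+3))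
      (summable_invpow (m+3) (by omega))
    · intro k
      have hc : ContinuousAt (fun s : ℝ => (1/(1+s)) ^ (k+1) / ((k:ℝ)+1) ^ (m+3)) 0 := by
        apply ContinuousAt.div_const
        apply ContinuousAt.pow
        apply ContinuousAt.div continuousAt_const (by fun_prop) (by norm_num)
      have h3 := hc.tendsto.mono_left (nhdsWithin_le_nhds (s := Set.Ioi (0:ℝ)))
      simpa using h3
    · filter_upwards [eventually_mem_nhdsWithin] with s hs
      intro k
      have hs' : (0:ℝ) < s := hs
      have h1s : (0:ℝ) < 1 + s := by linarith
      have hu : |1/(1+s)| ≤ 1 := by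
        rw [abs_of_pos (by positivity), div_le_one h1s]; linarith
      rw [norm_div, norm_pow, Real.norm_eq_abs, Real.norm_eq_abs]
      rw [abs_of_pos (by positivity : (0:ℝ) < ((k:ℝ)+1)^(m+3))]
      gcongr
      · exact pow_le_one₀ (abs_nonneg _) hu
  simpa [Li] using key

noncomputable def G (t : ℝ) : ℝ :=
  -Li 2 (-t) * Real.log (1 + t) - Real.log t * (Real.log (1 + t)) ^ 2
    + (2 / 3) * (Real.log (1 + t)) ^ 3
    + 2 * Real.log (1 + t) * Li 2 (1 / (1 + t))
    + 2 * Li 3 (1 / (1 + t)) - 2 * Li 3 1 + Li 3 (-t)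

noncomputable def F (t : ℝ) : ℝ := ∑' n : ℕ, H 2 n / n * (-t) ^ n

lemma tendsto_G_zero : Tendsto G (nhdsWithin 0 (Set.Ioi 0)) (nhds 0) := by
  have t1 := tendsto_li_neg 1
  have t7 := tendsto_li_neg 2
  have t2 := tendsto_log1p
  have t3 := tendsto_logterm
  have t4 := tendsto_term4
  have t5 := (tendsto_li_u 0).const_mul 2
  have TT := ((((((t1.neg.mul t2).sub t3).add ((t2.pow 3).const_mul (2/3))).add t4).add
    t5).sub (tendsto_const_nhds (x := 2 * Li 3 1))).add t7
  have : (-(0:ℝ)) * 0 - 0 + 2/3 * 0^3 + 0 + 2 * Li 3 1 - 2 * Li 3 1 + 0 = 0 := by ring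
  rw [this] at TT
  exact TT

lemma F_zero : F 0 = 0 := by
  rw [F]
  convert tsum_zero with n
  cases n with
  | zero => simp [H2_zero]
  | succ k => simp

lemma tendsto_F_zero : Tendsto F (nhdsWithin 0 (Set.Ioi 0)) (nhds 0) := by
  have h := (hasDerivAt_F (by norm_num : |(0:ℝ)| < 1)).continuousAt
  have h2 : ContinuousAt F 0 := h
  have h3 := h2.tendsto.mono_left (nhdsWithin_le_nhds (s := Set.Ioi (0:ℝ)))
  rwa [F_zero] at h3

lemma F_eq_G {x : ℝ} (hx0 : 0 < x) (hx1 : x < 1) : F x = G x := by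
  have hderiv : ∀ t ∈ Set.Ioo (0:ℝ) 1, HasDerivAt (fun s => F s - G s) 0 t := by
    intro t ht
    have habs : |t| < 1 := by rw [abs_of_pos ht.1]; exact ht.2
    have h1 := hasDerivAt_F habs
    rw [deriv_F_eq ht.1 ht.2] at h1
    have h2 := hasDerivAt_g ht.1 ht.2
    have h3 := h1.sub h2
    rw [sub_self] at h3
    exact h3
  have hconst : ∀ t ∈ Set.Ioo (0:ℝ) 1, F t - G t = F x - G x := by
    intro t ht
    have key := Convex.norm_image_sub_le_of_norm_deriv_le
      (f := fun s => F s - G s) (C := 0) (s := Set.Ioo (0:ℝ) 1)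
      (fun z hz => (hderiv z hz).differentiableAt)
      (fun z hz => by rw [(hderiv z hz).deriv]; simp)
      (convex_Ioo 0 1) (Set.mem_Ioo.mpr ⟨hx0, hx1⟩) ht
    simp only [zero_mul, norm_le_zero_iff, sub_eq_zero] at key
    exact key
  have hne : (nhdsWithin (0:ℝ) (Set.Ioo 0 1)).NeBot := left_nhdsWithin_Ioo_neBot (by norm_num)
  have htend : Tendsto (fun t => F t - G t) (nhdsWithin 0 (Set.Ioo (0:ℝ) 1)) (nhds 0) := by
    have := (tendsto_F_zero.sub tendsto_G_zero).mono_left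
      (nhdsWithin_mono (0:ℝ) (Set.Ioo_subset_Ioi_self : Set.Ioo (0:ℝ) 1 ⊆ Set.Ioi 0))
    simpa using this
  have hconst' : Tendsto (fun t => F t - G t) (nhdsWithin 0 (Set.Ioo (0:ℝ) 1)) (nhds (F x - G x)) := by
    apply Tendsto.congr' _ (tendsto_const_nhds (x := F x - G x))
    filter_upwards [eventually_mem_nhdsWithin] with t ht
    exact (hconst t ht).symm
  have := tendsto_nhds_unique hconst' htend
  linarith

theorem stmt7 (x : ℝ) (hx0 : 0 < x) (hx1 : x < 1) :
    Filter.Tendsto (fun N => ∑ n ∈ Finset.Icc 1 N, H 2 n / (n : ℝ) * (-x) ^ n)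
      Filter.atTop
      (nhds (-Li 2 (-x) * Real.log (1 + x) - Real.log x * (Real.log (1 + x)) ^ 2
        + (2 / 3) * (Real.log (1 + x)) ^ 3
        + 2 * Real.log (1 + x) * Li 2 (1 / (1 + x))
        + 2 * Li 3 (1 / (1 + x)) - 2 * Li 3 1 + Li 3 (-x))) := by
  have habs : |x| < 1 := by rw [abs_of_pos hx0]; exact hx1
  set c : ℕ → ℝ := fun n => H 2 n / (n:ℝ) * (-x) ^ n with hc
  have hsummable : Summable c := by
    apply Summable.of_norm
    apply Summable.of_nonneg_of_le (fun n => norm_nonneg _) (fun n => ?_)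
      ((summable_geometric_of_lt_one (abs_nonneg x) habs).mul_left 2)
    rw [hc]
    simp only [norm_mul, norm_div, Real.norm_eq_abs, abs_pow, abs_neg]
    apply mul_le_mul _ (le_refl _) (by positivity) (by norm_num)
    cases n with
    | zero => simp [H2_zero]
    | succ k =>
      rw [abs_of_nonneg (H2_nonneg _), abs_of_nonneg (by positivity : (0:ℝ) ≤ ((k+1:ℕ):ℝ))]
      rw [div_le_iff₀ (by positivity)]
      calc H 2 (k+1) ≤ 2 := H2_le_two _
        _ ≤ 2 * ((k+1:ℕ):ℝ) := by
            have : (1:ℝ) ≤ ((k+1:ℕ):ℝ) := by exact_mod_cast Nat.succ_le_succ (Nat.zero_le k)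
            nlinarith
  have hs : HasSum c (F x) := hsummable.hasSum
  have h4 := hs.tendsto_sum_nat.comp (tendsto_add_atTop_nat 1)
  have hIcc : ∀ N, ∑ n ∈ Finset.Icc 1 N, c n = ∑ n ∈ Finset.range (N+1), c n := by
    intro N
    have h0 : Finset.range (N+1) = insert 0 (Finset.Icc 1 N) := by
      ext j; simp [Finset.mem_range, Finset.mem_insert, Finset.mem_Icc]; omega
    rw [h0, Finset.sum_insert (by simp)]
    have : c 0 = 0 := by simp [hc, H2_zero]
    rw [this, zero_add]
  have hFG := F_eq_G hx0 hx1
  rw [show (-Li 2 (-x) * Real.log (1 + x) - Real.log x * (Real.log (1 + x)) ^ 2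
        + (2 / 3) * (Real.log (1 + x)) ^ 3
        + 2 * Real.log (1 + x) * Li 2 (1 / (1 + x))
        + 2 * Li 3 (1 / (1 + x)) - 2 * Li 3 1 + Li 3 (-x)) = G x from rfl, ← hFG]
  apply Tendsto.congr _ h4
  intro N
  exact (hIcc N).symm
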